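/- Let 1 ≤ q < 2, λ₊, λ₋ > 0 and μ > 0. If w : ℝ → ℝ is a C¹ function with w'' existing a.e. and satisfying -w'' = μ(λ₊(w⁺)^{q-1} - λ₋(w⁻)^{q-1}) on ℝ (in the weak sense), and w(0) = w'(0) = 0, then w ≡ 0 on ℝ. (One may show the Hamiltonian H(w,w') = (w')²/2 + μλ₊(w⁺)^q/q + μλ₋(w⁻)^q/q is constant along solutions and conclude.) -/

import Mathlib

/-- The two-phase nonlinearity `λ₊ (s⁺)^{q-1} - λ₋ (s⁻)^{q-1}`, interpreted for `q = 1`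
as `λ₊ χ_{s>0} - λ₋ χ_{s<0}`. -/
noncomputable def twoPhase (lp lm q s : ℝ) : ℝ :=
  if 0 < s then lp * s ^ (q - 1)
  else if s < 0 then -(lm * (-s) ^ (q - 1))
  else 0


noncomputable def FF (lp lm q s : ℝ) : ℝ :=
  (lp * (max s 0) ^ q + lm * (max (-s) 0) ^ q) / q

lemma twoPhase_zero (lp lm q : ℝ) : twoPhase lp lm q 0 = 0 := by
  simp [twoPhase]

lemma twoPhase_neg (lp lm q s : ℝ) : twoPhase lm lp q (-s) = -(twoPhase lp lm q s) := by
  rcases lt_trichotomy s 0 with h | h | h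
  · simp [twoPhase, h, not_lt.2 h.le, h.not_gt, neg_pos.2 h]
  · simp [twoPhase, h]
  · simp [twoPhase, h, not_lt.2 h.le, neg_neg, neg_lt_zero.2 h, h.not_gt]

lemma FF_zero (lp lm q : ℝ) (hq : 0 < q) : FF lp lm q 0 = 0 := by
  simp [FF, Real.zero_rpow hq.ne']

lemma FF_nonneg (lp lm q s : ℝ) (hlp : 0 < lp) (hlm : 0 < lm) (hq : 0 < q) :
    0 ≤ FF lp lm q s := by
  apply div_nonneg _ hq.le
  have h1 : (0:ℝ) ≤ (max s 0) ^ q := Real.rpow_nonneg (le_max_right _ _) q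
  have h2 : (0:ℝ) ≤ (max (-s) 0) ^ q := Real.rpow_nonneg (le_max_right _ _) q
  nlinarith

lemma FF_eq_zero (lp lm q s : ℝ) (hlp : 0 < lp) (hlm : 0 < lm) (hq : 0 < q)
    (h : FF lp lm q s = 0) : s = 0 := by
  by_contra hs
  rcases lt_or_gt_of_ne hs with h1 | h1
  · have hpos : (0:ℝ) < (max (-s) 0) ^ q := by
      apply Real.rpow_pos_of_pos; simp [lt_max_iff]; linarith
    have h2 : (0:ℝ) ≤ (max s 0) ^ q := Real.rpow_nonneg (le_max_right _ _) q
    have : 0 < FF lp lm q s := by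
      apply div_pos _ hq; nlinarith
    linarith
  · have hpos : (0:ℝ) < (max s 0) ^ q := by
      apply Real.rpow_pos_of_pos; simp [lt_max_iff]; linarith
    have h2 : (0:ℝ) ≤ (max (-s) 0) ^ q := Real.rpow_nonneg (le_max_right _ _) q
    have : 0 < FF lp lm q s := by
      apply div_pos _ hq; nlinarith
    linarith

lemma hasDerivAt_FF (lp lm q s : ℝ) (hq : 1 ≤ q) (hs : s ≠ 0) :
    HasDerivAt (FF lp lm q) (twoPhase lp lm q s) s := by
  have hq0 : (0:ℝ) < q := lt_of_lt_of_le one_pos hq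
  rcases lt_or_gt_of_ne hs with h1 | h1
  · -- s < 0
    have key : HasDerivAt (fun t => lm * (-t) ^ q / q) (-(lm * (-s) ^ (q-1))) s := by
      have h2 : HasDerivAt (fun t : ℝ => -t) (-1) s := (hasDerivAt_id s).neg
      have h3 : HasDerivAt (fun y : ℝ => y ^ q) (q * (-s) ^ (q - 1)) (-s) :=
        Real.hasDerivAt_rpow_const (Or.inl (by linarith))
      have h4 := (h3.comp s h2)
      have h5 := (h4.const_mul lm).div_const q
      refine h5.congr_deriv ?_
      field_simp
    have heq : (fun t => lm * (-t) ^ q / q) =ᶠ[nhds s] FF lp lm q := by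
      filter_upwards [Iio_mem_nhds h1] with t ht
      simp only [Set.mem_Iio] at ht
      rw [FF, max_eq_right ht.le, max_eq_left (by linarith : (0:ℝ) ≤ -t),
        Real.zero_rpow hq0.ne']
      ring
    have : HasDerivAt (FF lp lm q) (-(lm * (-s) ^ (q-1))) s := key.congr_of_eventuallyEq heq.symm
    convert this using 1
    simp [twoPhase, h1, not_lt.2 h1.le]
  · -- s > 0
    have key : HasDerivAt (fun t => lp * t ^ q / q) (lp * s ^ (q-1)) s := by
      have h3 : HasDerivAt (fun y : ℝ => y ^ q) (q * s ^ (q - 1)) s :=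
        Real.hasDerivAt_rpow_const (Or.inl (by linarith))
      have h5 := (h3.const_mul lp).div_const q
      refine h5.congr_deriv ?_
      field_simp
    have heq : (fun t => lp * t ^ q / q) =ᶠ[nhds s] FF lp lm q := by
      filter_upwards [Ioi_mem_nhds h1] with t ht
      simp only [Set.mem_Ioi] at ht
      rw [FF, max_eq_left ht.le, max_eq_right (by linarith : -t ≤ (0:ℝ)),
        Real.zero_rpow hq0.ne']
      ring
    have : HasDerivAt (FF lp lm q) (lp * s ^ (q-1)) s := key.congr_of_eventuallyEq heq.symm
    convert this using 1
    simp [twoPhase, h1]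

open Filter Topology Set in
lemma no_pos_cross (lp lm μ : ℝ) (hlp : 0 < lp) (hμ : 0 < μ)
    (w w' : ℝ → ℝ)
    (hw : ∀ x, HasDerivAt w (w' x) x)
    (hw' : ∀ x, HasDerivAt w' (-(μ * twoPhase lp lm 1 (w x))) x)
    (x : ℝ) (hx : w x = 0) (hv : 0 < w' x) : False := by
  -- w is positive just to the right of x
  have hslope : Tendsto (slope w x) (𝓝[>] x) (𝓝 (w' x)) :=
    (hasDerivAt_iff_tendsto_slope.1 (hw x)).mono_left
      (nhdsWithin_mono x fun y hy => ne_of_gt hy)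
  have hev : ∀ᶠ y in 𝓝[>] x, 0 < slope w x y := hslope.eventually (lt_mem_nhds hv)
  rw [eventually_iff_exists_mem] at hev
  obtain ⟨s, hs, hpos⟩ := hev
  rw [mem_nhdsGT_iff_exists_Ioo_subset] at hs
  obtain ⟨u, hu, hsub⟩ := hs
  simp only [mem_Ioi] at hu
  have hwpos : ∀ y ∈ Ioo x u, 0 < w y := by
    intro y hy
    have := hpos y (hsub hy)
    rw [slope_def_field, hx, sub_zero, div_pos_iff] at this
    rcases this with ⟨h1, _⟩ | ⟨_, h2⟩
    · exact h1
    · linarith [hy.1]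
  -- on (x,u), w'' = -(μ*lp)
  have hderiv : ∀ y ∈ Ioo x u, HasDerivAt w' (-(μ * lp)) y := by
    intro y hy
    have := hw' y
    rwa [show twoPhase lp lm 1 (w y) = lp by
      simp [twoPhase, hwpos y hy, Real.rpow_zero]] at this
  -- slope of w' from x to any y ∈ (x,u) equals -(μ*lp)
  have hslope' : ∀ y ∈ Ioo x u, slope w' x y = -(μ * lp) := by
    intro y hy
    obtain ⟨c, hc, hceq⟩ := exists_hasDerivAt_eq_slope w' (fun _ => -(μ * lp)) hy.1
      (fun z _ => ((hw' z).continuousAt).continuousWithinAt)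
      (fun z hz => hderiv z ⟨hz.1, lt_trans hz.2 hy.2⟩)
    rw [slope_def_field, hceq]
  -- but the derivative of w' at x is 0
  have h0 : HasDerivAt w' 0 x := by
    have := hw' x
    rwa [hx, show twoPhase lp lm 1 0 = 0 by simp [twoPhase], mul_zero, neg_zero] at this
  have ht0 : Tendsto (slope w' x) (𝓝[>] x) (𝓝 0) :=
    (hasDerivAt_iff_tendsto_slope.1 h0).mono_left
      (nhdsWithin_mono x fun y hy => ne_of_gt hy)
  have ht1 : Tendsto (slope w' x) (𝓝[>] x) (𝓝 (-(μ * lp))) := by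
    apply Tendsto.congr' _ tendsto_const_nhds
    filter_upwards [Ioo_mem_nhdsGT_of_mem ⟨le_refl x, hu⟩] with y hy
    exact (hslope' y hy).symm
  have := tendsto_nhds_unique ht0 ht1
  nlinarith

lemma FF_le (lp lm q s : ℝ) (hlp : 0 < lp) (hlm : 0 < lm) (hq : 0 < q) :
    FF lp lm q s ≤ ((lp + lm) / q) * |s| ^ q := by
  have h1 : (max s 0) ^ q ≤ |s| ^ q :=
    Real.rpow_le_rpow (le_max_right _ _) (max_le (le_abs_self s) (abs_nonneg s)) hq.le
  have h2 : (max (-s) 0) ^ q ≤ |s| ^ q :=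
    Real.rpow_le_rpow (le_max_right _ _)
      (max_le (neg_le_abs s) (abs_nonneg s)) hq.le
  rw [FF, div_mul_eq_mul_div, div_le_div_iff_of_pos_right hq]
  nlinarith

open Asymptotics Filter Topology in
lemma hasDerivAt_FF_comp_zero (lp lm q μ : ℝ) (hlp : 0 < lp) (hlm : 0 < lm)
    (hq1 : 1 ≤ q) (w w' : ℝ → ℝ) (x : ℝ)
    (hw : HasDerivAt w (w' x) x) (hx : w x = 0) (hq : 1 < q ∨ w' x = 0) :
    HasDerivAt (fun y => FF lp lm q (w y)) 0 x := by
  have hq0 : (0:ℝ) < q := lt_of_lt_of_le one_pos hq1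
  have hwc : Tendsto (fun y => |w y|) (𝓝 x) (𝓝 0) := by
    have := (hw.continuousAt.tendsto).comp tendsto_id
    have h2 : Tendsto w (𝓝 x) (𝓝 0) := by rw [← hx]; exact hw.continuousAt
    simpa using h2.abs
  -- FF ∘ w is big-O of |w|^q
  have hO : (fun y => FF lp lm q (w y)) =O[𝓝 x] (fun y => |w y| ^ q) := by
    apply IsBigO.of_bound ((lp + lm) / q)
    filter_upwards with y
    rw [Real.norm_eq_abs, Real.norm_eq_abs,
      abs_of_nonneg (FF_nonneg lp lm q (w y) hlp hlm hq0),
      abs_of_nonneg (Real.rpow_nonneg (abs_nonneg _) q)]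
    exact FF_le lp lm q (w y) hlp hlm hq0
  -- |w|^q is little-o of (y - x)
  have ho : (fun y => |w y| ^ q) =o[𝓝 x] (fun y => y - x) := by
    rcases hq with hq | hv
    · -- q > 1 : |w|^q = o(w) and w = O(y - x)
      have h1 : (fun y => |w y| ^ q) =o[𝓝 x] (fun y => w y) := by
        rw [isLittleO_iff]
        intro ε hε
        have htd : Tendsto (fun y => |w y| ^ (q - 1)) (𝓝 x) (𝓝 0) := by
          have hc : Tendsto (fun t : ℝ => t ^ (q - 1)) (𝓝 0) (𝓝 (0 ^ (q - 1))) :=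
            (Real.continuousAt_rpow_const 0 (q - 1) (Or.inr (by linarith))).tendsto
          rw [Real.zero_rpow (by linarith : q - 1 ≠ 0)] at hc
          exact hc.comp hwc
        filter_upwards [htd.eventually (ge_mem_nhds hε)] with y hy
        rw [Real.norm_eq_abs, Real.norm_eq_abs,
          abs_of_nonneg (Real.rpow_nonneg (abs_nonneg _) q)]
        rcases eq_or_ne (w y) 0 with h | h
        · simp [h, Real.zero_rpow hq0.ne']
        · have hpos : 0 < |w y| := abs_pos.2 h
          calc |w y| ^ q = |w y| ^ (q - 1) * |w y| ^ (1:ℝ) := by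
                rw [← Real.rpow_add hpos]; ring_nf
            _ ≤ ε * |w y| := by
                rw [Real.rpow_one]
                exact mul_le_mul_of_nonneg_right hy (abs_nonneg _)
      have h2 : (fun y => w y) =O[𝓝 x] (fun y => y - x) := by
        have := hw.isBigO_sub
        simpa [hx] using this
      exact h1.trans_isBigO h2
    · -- w' x = 0 : |w|^q = O(w) near x, and w = o(y-x)
      have h1 : (fun y => |w y| ^ q) =O[𝓝 x] (fun y => w y) := by
        apply IsBigO.of_bound 1
        filter_upwards [hwc.eventually (ge_mem_nhds one_pos)] with y hy
        rw [Real.norm_eq_abs, Real.norm_eq_abs,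
          abs_of_nonneg (Real.rpow_nonneg (abs_nonneg _) q), one_mul]
        rcases eq_or_ne (w y) 0 with h | h
        · simp [h, Real.zero_rpow hq0.ne']
        · have hpos : 0 < |w y| := abs_pos.2 h
          calc |w y| ^ q ≤ |w y| ^ (1:ℝ) :=
                Real.rpow_le_rpow_of_exponent_ge hpos hy hq1
            _ = |w y| := Real.rpow_one _
      have h2 : (fun y => w y) =o[𝓝 x] (fun y => y - x) := by
        have := hw.hasFDerivAt.isLittleO
        simpa [hx, hv] using this
      exact h1.trans_isLittleO h2
  have key : (fun y => FF lp lm q (w y)) =o[𝓝 x] (fun y => y - x) := hO.trans_isLittleO ho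
  rw [hasDerivAt_iff_isLittleO]
  simpa [hx, FF_zero lp lm q hq0] using key


/-- Let `1 ≤ q < 2`, `λ₊, λ₋ > 0`, `μ > 0`. If `w` is `C¹` with second
derivative satisfying `-w'' = μ(λ₊(w⁺)^{q-1} - λ₋(w⁻)^{q-1})` on `ℝ` and
`w(0) = w'(0) = 0`, then `w ≡ 0`. -/
theorem ode_unique_trivial (q lp lm μ : ℝ) (hq1 : 1 ≤ q) (hq2 : q < 2)
    (hlp : 0 < lp) (hlm : 0 < lm) (hμ : 0 < μ)
    (w w' : ℝ → ℝ)
    (hw : ∀ x, HasDerivAt w (w' x) x)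
    (hw' : ∀ x, HasDerivAt w' (-(μ * twoPhase lp lm q (w x))) x)
    (h0 : w 0 = 0) (h0' : w' 0 = 0) :
    ∀ x, w x = 0 := by
  have hq0 : (0:ℝ) < q := lt_of_lt_of_le one_pos hq1
  -- at any zero of w, either q > 1 or w' vanishes
  have hcross : ∀ x, w x = 0 → (1 < q ∨ w' x = 0) := by
    rcases eq_or_lt_of_le hq1 with hq | hq
    · subst hq
      intro x hx
      right
      by_contra hv
      rcases lt_or_gt_of_ne hv with hv | hv
      · -- w' x < 0 : apply no_pos_cross to -w
        refine no_pos_cross lm lp μ hlm hμ (fun y => -(w y)) (fun y => -(w' y))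
          (fun y => (hw y).neg) (fun y => ?_) x (by simp [hx]) (by simpa using hv)
        have := (hw' y).neg
        refine this.congr_deriv ?_
        rw [twoPhase_neg]
        ring
      · exact no_pos_cross lp lm μ hlp hμ w w' hw hw' x hx hv
    · intro x _; exact Or.inl hq
  -- the energy is everywhere differentiable with zero derivative
  set E : ℝ → ℝ := fun y => w' y * w' y / 2 + μ * FF lp lm q (w y) with hE
  have hEderiv : ∀ x, HasDerivAt E 0 x := by
    intro x
    set t := twoPhase lp lm q (w x) with ht
    have d1 : HasDerivAt (fun y => w' y * w' y / 2)
        ((-(μ * t) * w' x + w' x * -(μ * t)) / 2) x := ((hw' x).mul (hw' x)).div_const 2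
    have d2 : HasDerivAt (fun y => FF lp lm q (w y)) (t * w' x) x := by
      rcases eq_or_ne (w x) 0 with hx | hx
      · have h := hasDerivAt_FF_comp_zero lp lm q μ hlp hlm hq1 w w' x (hw x) hx (hcross x hx)
        have ht0 : t = 0 := by rw [ht, hx, twoPhase_zero]
        rw [ht0, zero_mul]
        exact h
      · exact (hasDerivAt_FF lp lm q (w x) hq1 hx).comp x (hw x)
    have := d1.add (d2.const_mul μ)
    refine this.congr_deriv ?_
    ring
  have hconst : ∀ x, E x = E 0 :=
    fun x => is_const_of_deriv_eq_zero
      (fun y => (hEderiv y).differentiableAt) (fun y => (hEderiv y).deriv) x 0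
  have hE0 : E 0 = 0 := by
    simp [hE, h0, h0', FF_zero lp lm q hq0]
  intro x
  have hx := (hconst x).trans hE0
  have h1 : 0 ≤ w' x * w' x / 2 := by nlinarith [mul_self_nonneg (w' x)]
  have h2 : 0 ≤ FF lp lm q (w x) := FF_nonneg lp lm q (w x) hlp hlm hq0
  have hFF : FF lp lm q (w x) = 0 := by
    simp only [hE] at hx
    nlinarith
  exact FF_eq_zero lp lm q (w x) hlp hlm hq0 hFF
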